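/- Let k be a field of characteristic zero and let k⟨y_1,…,y_n⟩ be the free associative k-algebra on n generators. Then for all scalars w_1,…,w_n ∈ k and every multi-index K = (K_1,…,K_n) ∈ ℕ^n, the identity (K_1 w_1 + ⋯ + K_n w_n) · y^K = Σ_{0 < s ≤ K} (∏_{i=1}^n C(K_i, s_i)) · w_{max{i : s_i ≠ 0}} · [y^s]] · y^{K−s} holds, where the sum is over multi-indices s ∈ ℕ^n with s ≠ 0 and s_i ≤ K_i for all i, and C(·,·) denotes binomial coefficients. -/

import Mathlib

/-!
Statement 13: an identity in the free associative algebra.  `cbrk` is the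
complete bracket `[a₁, …, a_m]] = [a₁, [a₂, ⋯ [a_{m-1}, a_m] ⋯]]`, `yPow K` is
the ordered monomial `y₁^{K₁} ⋯ y_n^{K_n}`, `yWord s` the word consisting of
`s₁` copies of `y₁`, …, `s_n` copies of `y_n`, and `wmax w s` is `w_{max{i : s_i ≠ 0}}`.
-/

noncomputable section

variable (k : Type*) [Field k]

/-- The complete bracket `[a₁, …, a_m]]`. -/
def cbrk {B : Type*} [Ring B] : List B → B
  | [] => 0
  | [a] => a
  | a :: b :: rest => a * cbrk (b :: rest) - cbrk (b :: rest) * a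

/-- The ordered monomial `y^K = y₁^{K₁} ⋯ y_n^{K_n}`. -/
def yPow (n : ℕ) (K : Fin n → ℕ) : FreeAlgebra k (Fin n) :=
  (List.ofFn fun i => FreeAlgebra.ι k i ^ K i).prod

/-- The word consisting of `s₁` copies of `y₁`, …, `s_n` copies of `y_n`. -/
def yWord (n : ℕ) (s : Fin n → ℕ) : List (FreeAlgebra k (Fin n)) :=
  (List.ofFn fun i => List.replicate (s i) (FreeAlgebra.ι k i)).flatten

/-- `w_{max{i : s_i ≠ 0}}` (defined as `0` for `s = 0`). -/
def wmax {n : ℕ} (w : Fin n → k) (s : Fin n → ℕ) : k :=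
  if h : (Finset.univ.filter fun i => s i ≠ 0).Nonempty then
    w ((Finset.univ.filter fun i => s i ≠ 0).max' h)
  else 0


section Stmt13Aux
set_option linter.unusedSectionVars false
variable {B : Type*} [Ring B]

def nestAd (l : List B) (b : B) : B := l.foldr (fun x y => x * y - y * x) b

@[simp] lemma nestAd_nil (b : B) : nestAd ([] : List B) b = b := rfl
@[simp] lemma nestAd_cons (x : B) (l : List B) (b : B) :
    nestAd (x :: l) b = x * nestAd l b - nestAd l b * x := rfl

lemma nestAd_append (l₁ l₂ : List B) (b : B) :
    nestAd (l₁ ++ l₂) b = nestAd l₁ (nestAd l₂ b) := List.foldr_append ..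

@[simp] lemma nestAd_zero (l : List B) : nestAd l (0 : B) = 0 := by
  induction l with
  | nil => rfl
  | cons x l ih => simp [ih]

lemma nestAd_replicate_self (a : B) (t : ℕ) (ht : 1 ≤ t) :
    nestAd (List.replicate t a) a = 0 := by
  induction t with
  | zero => omega
  | succ t ih =>
    rcases Nat.eq_or_lt_of_le ht with h | h
    · simp [← h]
    · have := ih (by omega)
      simp [List.replicate_succ, this]

lemma single_var (a b : B) (m : ℕ) :
    a ^ m * b = ∑ t ∈ Finset.range (m + 1),
      (m.choose t) • (nestAd (List.replicate t a) b * a ^ (m - t)) := by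
  induction m with
  | zero => simp
  | succ m ih =>
    set X : ℕ → B := fun t => nestAd (List.replicate t a) b * a ^ (m + 1 - t) with hX
    have hcomm : ∀ j : ℕ, a ^ j * a = a * a ^ j := fun j => ((Commute.refl a).pow_left j).eq
    have key : a ^ (m + 1) * b = a * (a ^ m * b) := by rw [pow_succ', mul_assoc]
    have step : ∀ t ∈ Finset.range (m + 1),
        a * (m.choose t • (nestAd (List.replicate t a) b * a ^ (m - t)))
        = m.choose t • X (t + 1) + m.choose t • X t := by
      intro t ht
      rw [Finset.mem_range] at ht
      have h1 : m + 1 - (t + 1) = m - t := by omega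
      have h2 : m + 1 - t = (m - t) + 1 := by omega
      rw [mul_smul_comm, ← smul_add, hX]
      simp only [h1, h2]
      rw [List.replicate_succ, nestAd_cons, pow_succ, hcomm]
      congr 1
      noncomm_ring
    rw [key, ih, Finset.mul_sum, Finset.sum_congr rfl step, Finset.sum_add_distrib]
    rw [Finset.sum_range_succ' (fun t => (m + 1).choose t • X t) (m + 1)]
    simp only [Nat.choose_succ_succ, add_smul, Finset.sum_add_distrib]
    have e3 : (∑ t ∈ Finset.range (m + 1), m.choose (t + 1) • X (t + 1))
        + (m + 1).choose 0 • X 0 = ∑ t ∈ Finset.range (m + 1), m.choose t • X t := by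
      have h0 : (m + 1).choose 0 = m.choose 0 := by simp
      rw [h0, ← Finset.sum_range_succ' (fun t => m.choose t • X t) (m + 1),
        Finset.sum_range_succ]
      simp
    rw [add_assoc, e3]

def aPow {n : ℕ} (a : Fin n → B) (K : Fin n → ℕ) : B :=
  (List.ofFn fun i => a i ^ K i).prod

def aWord {n : ℕ} (a : Fin n → B) (s : Fin n → ℕ) : List B :=
  (List.ofFn fun i => List.replicate (s i) (a i)).flatten

@[simp] lemma aPow_zero_vars (a : Fin 0 → B) (K : Fin 0 → ℕ) : aPow a K = 1 := rfl

@[simp] lemma aWord_zero_vars (a : Fin 0 → B) (s : Fin 0 → ℕ) : aWord a s = [] := rfl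

lemma aPow_snoc {n : ℕ} (a : Fin (n + 1) → B) (u : Fin n → ℕ) (v : ℕ) :
    aPow a (Fin.snoc u v) = aPow (Fin.init a) u * a (Fin.last n) ^ v := by
  unfold aPow
  rw [List.ofFn_succ', List.concat_eq_append, List.prod_append, List.prod_cons,
    List.prod_nil, mul_one]
  simp [Fin.init, Fin.snoc_castSucc]

lemma aWord_snoc {n : ℕ} (a : Fin (n + 1) → B) (u : Fin n → ℕ) (v : ℕ) :
    aWord a (Fin.snoc u v) = aWord (Fin.init a) u ++ List.replicate v (a (Fin.last n)) := by
  unfold aWord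
  rw [List.ofFn_succ', List.concat_eq_append, List.flatten_append]
  simp [Fin.init, Fin.snoc_castSucc]

lemma sub_snoc {n : ℕ} (K : Fin (n + 1) → ℕ) (u : Fin n → ℕ) (v : ℕ) :
    K - Fin.snoc u v = Fin.snoc (Fin.init K - u) (K (Fin.last n) - v) := by
  funext i
  refine Fin.lastCases ?_ (fun j => ?_) i <;>
    simp [Pi.sub_apply, Fin.snoc_castSucc, Fin.init]

lemma sum_Iic_snoc {M : Type*} [AddCommMonoid M] {n : ℕ} (K : Fin (n + 1) → ℕ)
    (f : (Fin (n + 1) → ℕ) → M) :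
    ∑ s ∈ Finset.Iic K, f s =
      ∑ t ∈ Finset.range (K (Fin.last n) + 1), ∑ u ∈ Finset.Iic (Fin.init K),
        f (Fin.snoc u t) := by
  rw [← Finset.sum_product']
  refine Finset.sum_nbij' (i := fun s => (s (Fin.last n), Fin.init s))
    (j := fun p => Fin.snoc p.2 p.1) ?_ ?_ ?_ ?_ ?_
  · intro s hs
    rw [Finset.mem_Iic] at hs
    simp only [Finset.mem_product, Finset.mem_range, Finset.mem_Iic]
    exact ⟨Nat.lt_succ_of_le (hs _), fun j => hs _⟩
  · intro p hp
    simp only [Finset.mem_product, Finset.mem_range, Finset.mem_Iic] at hp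
    rw [Finset.mem_Iic]
    intro i
    refine Fin.lastCases ?_ (fun j => ?_) i
    · simpa using Nat.lt_succ_iff.mp hp.1
    · simpa [Fin.init] using hp.2 j
  · intro s _
    exact Fin.snoc_init_self s
  · intro p _
    ext
    · simp
    · simp [Fin.init]
  · intro s _
    rw [Fin.snoc_init_self]

lemma multi {n : ℕ} (a : Fin n → B) (K : Fin n → ℕ) (b : B) :
    aPow a K * b = ∑ s ∈ Finset.Iic K,
      (∏ i, (K i).choose (s i)) • (nestAd (aWord a s) b * aPow a (K - s)) := by
  induction n generalizing b with
  | zero =>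
    have hIic : Finset.Iic K = {K} := by
      ext s
      simp [Finset.mem_Iic, Subsingleton.elim s K]
    rw [hIic, Finset.sum_singleton]
    simp
  | succ n ih =>
    set A := Fin.init a with hA
    set an := a (Fin.last n) with han
    set Kc := Fin.init K with hKc
    set Kn := K (Fin.last n) with hKn
    have hP : aPow a K = aPow A Kc * an ^ Kn := by
      rw [← aPow_snoc a Kc Kn, Fin.snoc_init_self]
    rw [sum_Iic_snoc]
    have point : ∀ t ∈ Finset.range (Kn + 1), ∀ u ∈ Finset.Iic Kc,
        (∏ i, (K i).choose ((Fin.snoc u t : Fin (n+1) → ℕ) i)) •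
          (nestAd (aWord a (Fin.snoc u t)) b * aPow a (K - Fin.snoc u t))
        = (Kn.choose t) • (((∏ i, (Kc i).choose (u i)) •
            (nestAd (aWord A u) (nestAd (List.replicate t an) b) * aPow A (Kc - u)))
              * an ^ (Kn - t)) := by
      intro t _ u _
      have hprod : (∏ i, (K i).choose ((Fin.snoc u t : Fin (n+1) → ℕ) i))
          = (∏ i, (Kc i).choose (u i)) * Kn.choose t := by
        rw [Fin.prod_univ_castSucc]
        congr 1
        · exact Finset.prod_congr rfl fun j _ => by simp [Fin.snoc_castSucc, hKc, Fin.init]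
        · simp [hKn]
      rw [hprod, aWord_snoc, nestAd_append, sub_snoc, aPow_snoc]
      rw [mul_smul, smul_comm, smul_mul_assoc, mul_assoc]
    rw [Finset.sum_congr rfl fun t ht => Finset.sum_congr rfl fun u hu => point t ht u hu]
    calc aPow a K * b
        = ∑ t ∈ Finset.range (Kn + 1), Kn.choose t •
            ((aPow A Kc * nestAd (List.replicate t an) b) * an ^ (Kn - t)) := by
          rw [hP, mul_assoc, single_var, Finset.mul_sum]
          exact Finset.sum_congr rfl fun t _ => by
            rw [mul_smul_comm, mul_assoc]
      _ = _ := by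
          refine Finset.sum_congr rfl fun t _ => ?_
          rw [ih A Kc (nestAd (List.replicate t an) b), Finset.sum_mul, Finset.smul_sum]

variable {k}

lemma cbrk_cons (x : B) (l : List B) (h : l ≠ []) :
    cbrk (x :: l) = x * cbrk l - cbrk l * x := by
  cases l with
  | nil => exact absurd rfl h
  | cons y r => rfl

lemma cbrk_append_singleton (l : List B) (b : B) : cbrk (l ++ [b]) = nestAd l b := by
  induction l with
  | nil => rfl
  | cons x l ihl =>
    rw [List.cons_append, cbrk_cons x (l ++ [b]) (by simp), ihl, nestAd_cons]

lemma cbrk_word_zero (l : List B) (a : B) (t : ℕ) (ht : 2 ≤ t) :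
    cbrk (l ++ List.replicate t a) = 0 := by
  obtain ⟨t', rfl⟩ : ∃ t', t = t' + 1 := ⟨t - 1, by omega⟩
  rw [List.replicate_succ' , ← List.append_assoc, cbrk_append_singleton, nestAd_append,
    nestAd_replicate_self a t' (by omega), nestAd_zero]


lemma wmax_zero {n : ℕ} (w : Fin n → k) : wmax k w 0 = 0 := by
  rw [wmax, dif_neg]
  simp

lemma wmax_snoc_zero {n : ℕ} (w : Fin (n + 1) → k) (u : Fin n → ℕ) :
    wmax k w (Fin.snoc u 0) = wmax k (Fin.init w) u := by
  classical
  set S := Finset.univ.filter fun i : Fin (n+1) => (Fin.snoc u 0 : Fin (n+1) → ℕ) i ≠ 0 with hS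
  set S' := Finset.univ.filter fun j : Fin n => u j ≠ 0 with hS'
  have hmem : ∀ j : Fin n, j ∈ S' ↔ j.castSucc ∈ S := by
    intro j
    simp [hS, hS', Fin.snoc_castSucc]
  have hlast : Fin.last n ∉ S := by simp [hS]
  have hne : S.Nonempty ↔ S'.Nonempty := by
    constructor
    · rintro ⟨x, hx⟩
      refine Fin.lastCases ?_ (fun j hj => ⟨j, (hmem j).2 hj⟩) x hx
      intro h; exact absurd h hlast
    · rintro ⟨j, hj⟩
      exact ⟨j.castSucc, (hmem j).1 hj⟩
  rw [wmax, wmax]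
  by_cases h : S'.Nonempty
  · rw [dif_pos (hne.2 h), dif_pos h]
    have hmax : S.max' (hne.2 h) = (S'.max' h).castSucc := by
      refine le_antisymm (Finset.max'_le _ _ _ ?_) (Finset.le_max' _ _ ((hmem _).1 (S'.max'_mem h)))
      intro x hx
      refine Fin.lastCases ?_ (fun j hj => ?_) x hx
      · intro h'; exact absurd h' hlast
      · exact Fin.castSucc_le_castSucc_iff.2 (Finset.le_max' _ _ ((hmem j).2 hj))
    rw [hmax]
    rfl
  · rw [dif_neg (fun hh => h (hne.1 hh)), dif_neg h]

lemma wmax_snoc_pos {n : ℕ} (w : Fin (n + 1) → k) (u : Fin n → ℕ) (t : ℕ) (ht : t ≠ 0) :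
    wmax k w (Fin.snoc u t) = w (Fin.last n) := by
  classical
  have hlast : Fin.last n ∈ Finset.univ.filter
      fun i : Fin (n+1) => (Fin.snoc u t : Fin (n+1) → ℕ) i ≠ 0 := by
    simp [ht]
  rw [wmax, dif_pos ⟨_, hlast⟩]
  congr 1
  exact le_antisymm (Fin.le_last _) (Finset.le_max' _ _ hlast)

lemma main_lemma [Algebra k B] {n : ℕ} (a : Fin n → B) (w : Fin n → k) (K : Fin n → ℕ) :
    (∑ i, (K i : k) * w i) • aPow a K =
      ∑ s ∈ Finset.Iic K,
        ((∏ i, ((K i).choose (s i) : k)) * wmax k w s) • (cbrk (aWord a s) * aPow a (K - s)) := by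
  induction n with
  | zero =>
    have hIic : Finset.Iic K = {K} := by
      ext s
      simp [Finset.mem_Iic, Subsingleton.elim s K]
    rw [hIic, Finset.sum_singleton]
    have : wmax k w K = 0 := by
      rw [Subsingleton.elim K 0, wmax_zero]
    simp [this]
  | succ n ih =>
    set A := Fin.init a with hA
    set an := a (Fin.last n) with han
    set Kc := Fin.init K with hKc
    set Kn := K (Fin.last n) with hKn
    set wc := Fin.init w with hwc
    set wn := w (Fin.last n) with hwn
    have hP : aPow a K = aPow A Kc * an ^ Kn := by
      rw [← aPow_snoc a Kc Kn, Fin.snoc_init_self]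
    -- the inner sum as a function of t
    set G : ℕ → B := fun t => ∑ u ∈ Finset.Iic Kc,
      ((∏ i, ((K i).choose ((Fin.snoc u t : Fin (n+1) → ℕ) i) : k)) *
          wmax k w (Fin.snoc u t)) •
        (cbrk (aWord a (Fin.snoc u t)) * aPow a (K - Fin.snoc u t)) with hG
    have hcoef : ∀ (u : Fin n → ℕ) (t : ℕ),
        (∏ i, ((K i).choose ((Fin.snoc u t : Fin (n+1) → ℕ) i) : k))
        = (∏ j, ((Kc j).choose (u j) : k)) * (Kn.choose t : k) := by
      intro u t
      rw [Fin.prod_univ_castSucc]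
      congr 1
      · exact Finset.prod_congr rfl fun j _ => by simp [Fin.snoc_castSucc, hKc, Fin.init]
      · simp [hKn]
    have hG0 : G 0 = (∑ j, (Kc j : k) * wc j) • aPow a K := by
      simp only [hG]
      have hterm : ∀ u ∈ Finset.Iic Kc,
          ((∏ i, ((K i).choose ((Fin.snoc u 0 : Fin (n+1) → ℕ) i) : k)) *
              wmax k w (Fin.snoc u 0)) •
            (cbrk (aWord a (Fin.snoc u 0)) * aPow a (K - Fin.snoc u 0))
          = (((∏ j, ((Kc j).choose (u j) : k)) * wmax k wc u) •
              (cbrk (aWord A u) * aPow A (Kc - u))) * an ^ Kn := by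
        intro u _
        rw [hcoef, wmax_snoc_zero, aWord_snoc, sub_snoc, aPow_snoc]
        simp only [Nat.choose_zero_right, Nat.cast_one, mul_one, Nat.sub_zero,
          List.replicate_zero, List.append_nil]
        rw [smul_mul_assoc, mul_assoc]
      rw [Finset.sum_congr rfl hterm, ← Finset.sum_mul, ← ih A wc Kc, smul_mul_assoc, ← hP]
    have hG2 : ∀ t, 2 ≤ t → G t = 0 := by
      intro t ht
      simp only [hG]
      refine Finset.sum_eq_zero fun u _ => ?_
      rw [aWord_snoc, cbrk_word_zero _ _ _ ht, zero_mul, smul_zero]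
    have hG1 : Kn ≠ 0 → G 1 = ((Kn : k) * wn) • aPow a K := by
      intro hKn0
      simp only [hG]
      have hterm : ∀ u ∈ Finset.Iic Kc,
          ((∏ i, ((K i).choose ((Fin.snoc u 1 : Fin (n+1) → ℕ) i) : k)) *
              wmax k w (Fin.snoc u 1)) •
            (cbrk (aWord a (Fin.snoc u 1)) * aPow a (K - Fin.snoc u 1))
          = ((Kn : k) * wn) • (((∏ j, (Kc j).choose (u j)) •
              (nestAd (aWord A u) an * aPow A (Kc - u))) * an ^ (Kn - 1)) := by
        intro u _
        rw [hcoef, wmax_snoc_pos w u 1 one_ne_zero, aWord_snoc, sub_snoc, aPow_snoc]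
        simp only [Nat.choose_one_right, List.replicate_one]
        rw [cbrk_append_singleton]
        rw [show ((∏ j, ((Kc j).choose (u j) : k)) * ((Kn : k)) * wn)
            = ((Kn : k) * wn) * (∏ j, ((Kc j).choose (u j) : k)) by ring]
        rw [mul_smul]
        congr 1
        rw [← Nat.cast_prod, Nat.cast_smul_eq_nsmul, smul_mul_assoc, mul_assoc]
      rw [Finset.sum_congr rfl hterm, ← Finset.smul_sum, ← Finset.sum_mul, ← multi A Kc an]
      congr 1
      rw [hP, mul_assoc, ← pow_succ']
      congr 2
      omega
    rw [sum_Iic_snoc]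
    have hLHS : (∑ i, (K i : k) * w i) = (∑ j, (Kc j : k) * wc j) + (Kn : k) * wn := by
      rw [Fin.sum_univ_castSucc]
      rfl
    rw [hLHS, add_smul]
    show _ = ∑ t ∈ Finset.range (Kn + 1), G t
    rcases Nat.eq_zero_or_pos Kn with h0 | hpos
    · rw [h0]
      simp only [Nat.cast_zero, zero_mul, zero_smul, add_zero]
      rw [Finset.sum_range_one, hG0]
    · have hG1' := hG1 (by omega)
      obtain ⟨m, hm⟩ : ∃ m, Kn = m + 1 := ⟨Kn - 1, by omega⟩
      rw [hm] at hG1' ⊢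
      rw [Finset.sum_range_succ' G (m + 1), Finset.sum_range_succ' (fun t => G (t + 1)) m]
      have : ∑ t ∈ Finset.range m, G (t + 1 + 1) = 0 :=
        Finset.sum_eq_zero fun t _ => hG2 (t + 2) (by omega)
      rw [this, zero_add, hG0, hG1', add_comm]

end Stmt13Aux


/-- In the free associative algebra `k⟨y₁, …, y_n⟩` over a
field of characteristic zero, for scalars `w₁, …, w_n` and a multi-index `K`,
`(Σ K_i w_i) y^K = Σ_{0 < s ≤ K} (Π C(K_i, s_i)) w_{max{i : s_i ≠ 0}} [y^s]] y^{K-s}`. -/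

theorem statement13 [CharZero k] (n : ℕ) (w : Fin n → k) (K : Fin n → ℕ) :
    (∑ i, (K i : k) * w i) • yPow k n K =
      ∑ s ∈ (Finset.Iic K).erase 0,
        ((∏ i, ((K i).choose (s i) : k)) * wmax k w s) •
          (cbrk (yWord k n s) * yPow k n (K - s)) := by
  have h0 : ((∏ i, ((K i).choose ((0 : Fin n → ℕ) i) : k)) * wmax k w 0) •
      (cbrk (yWord k n 0) * yPow k n (K - 0)) = 0 := by
    rw [wmax_zero, mul_zero, zero_smul]
  rw [Finset.sum_erase (f := fun s => ((∏ i, ((K i).choose (s i) : k)) * wmax k w s) •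
      (cbrk (yWord k n s) * yPow k n (K - s))) (Finset.Iic K) h0]
  exact main_lemma (FreeAlgebra.ι k) w K
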